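/- arXiv:1902.05436 — 4 statements merged into one kernel-verified Lean document; each statement's English description precedes it below -/
import Mathlib

section
/- With the setup of the factCache transition: let F : ℤ → ℤ satisfy F n = 1 for n ≤ 1 and F n = n * F (n-1) for n > 1, and Inv (g, lastN) := g = -1 ∨ g = lastN * F (lastN - 1). If the pre-state (g, lastN) satisfies Inv, then the return value of factCache on input n (which is 1 if n ≤ 1; g if g ≠ -1 ∧ n = lastN; and n * F (n-1) otherwise) equals F n. -/
theorem stmt_3 (F : ℤ → ℤ)
    (hF1 : ∀ n : ℤ, n ≤ 1 → F n = 1)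
    (hF2 : ∀ n : ℤ, n > 1 → F n = n * F (n - 1))
    (g lastN n : ℤ)
    (hInv : g = -1 ∨ g = lastN * F (lastN - 1)) :
    (if n ≤ 1 then 1 else if g ≠ -1 ∧ n = lastN then g else n * F (n - 1)) = F n := by
  split_ifs with h1 h2
  · exact (hF1 n h1).symm
  · rcases hInv with h | h
    · exact absurd h h2.1
    · rw [h, ← h2.2, ← hF2 n (by omega)]
  · rw [← hF2 n (by omega)]
end

section
/- Combining invariant preservation and the return-value condition: for the factCache transition system started at state (-1, 0), any finite sequence of calls with arbitrary integer inputs yields, for each call with input n, the return value F n, where F is the unique function with F n = 1 for n ≤ 1 and F n = n * F (n-1) for n > 1. In particular, two calls with the same input always return the same value, i.e., factCache is observationally pure. -/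
/-- One step of the factCache transition (recursive call replaced by `F`):
returns the new state. -/
def factStep (F : ℤ → ℤ) (s : ℤ × ℤ) (n : ℤ) : ℤ × ℤ :=
  if n ≤ 1 then s
  else if s.1 ≠ -1 ∧ n = s.2 then s
  else (n * F (n - 1), n)

/-- Return value of factCache from state `s` on input `n`. -/
def factRet (F : ℤ → ℤ) (s : ℤ × ℤ) (n : ℤ) : ℤ :=
  if n ≤ 1 then 1
  else if s.1 ≠ -1 ∧ n = s.2 then s.1
  else n * F (n - 1)

/-- Sequential execution of a list of calls, collecting the return values. -/
def factRun (F : ℤ → ℤ) : ℤ × ℤ → List ℤ → List ℤ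
  | _, [] => []
  | s, n :: ns => factRet F s n :: factRun F (factStep F s n) ns


theorem factRun_inv (F : ℤ → ℤ)
    (hF1 : ∀ n : ℤ, n ≤ 1 → F n = 1)
    (hF2 : ∀ n : ℤ, n > 1 → F n = n * F (n - 1))
    (ns : List ℤ) : ∀ s : ℤ × ℤ, (s.1 ≠ -1 → s.1 = F s.2) →
    factRun F s ns = ns.map F := by
  induction ns with
  | nil => intro s hs; rfl
  | cons n ns ih =>
    intro s hs
    simp only [factRun, List.map_cons]
    congr 1
    · unfold factRet
      split
      · rw [hF1 n ‹_›]
      · split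
        · obtain ⟨h1, h2⟩ := ‹_ ∧ _›
          rw [hs h1, h2]
        · rw [hF2 n (by omega)]
    · apply ih
      unfold factStep
      split
      · exact hs
      · split
        · exact hs
        · intro _; exact (hF2 n (by omega)).symm

theorem stmt_4 (F : ℤ → ℤ)
    (hF1 : ∀ n : ℤ, n ≤ 1 → F n = 1)
    (hF2 : ∀ n : ℤ, n > 1 → F n = n * F (n - 1))
    (ns : List ℤ) :
    factRun F (-1, 0) ns = ns.map F := factRun_inv F hF1 hF2 ns _ (by simp)
end

section
/- Let F : ℤ → ℤ satisfy the factorial equations. Consider the single-entry caching factorial with global variable nineteen : ℤ and invariant Inv nineteen := nineteen = -1 ∨ nineteen = 19 * F 18. Then Inv holds initially (nineteen = -1), is preserved by the procedure's transition (which sets nineteen to 19 * F 18 when called with n = 19 and nineteen = -1, and leaves it unchanged otherwise), and under Inv the return value of the procedure on any input n (1 if n ≤ 1; nineteen if n = 19 and nineteen ≠ -1; 19 * F 18 if n = 19 and nineteen = -1; n * F (n-1) otherwise) equals F n. -/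
theorem stmt_9 (F : ℤ → ℤ)
    (hF1 : ∀ n : ℤ, n ≤ 1 → F n = 1)
    (hF2 : ∀ n : ℤ, n > 1 → F n = n * F (n - 1)) :
    (((-1 : ℤ) = -1 ∨ (-1 : ℤ) = 19 * F 18) ∧
     (∀ nineteen n : ℤ, (nineteen = -1 ∨ nineteen = 19 * F 18) →
        ((if n = 19 ∧ nineteen = -1 then 19 * F 18 else nineteen) = -1 ∨
         (if n = 19 ∧ nineteen = -1 then 19 * F 18 else nineteen) = 19 * F 18)) ∧
     (∀ nineteen n : ℤ, (nineteen = -1 ∨ nineteen = 19 * F 18) →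
        (if n ≤ 1 then 1
         else if n = 19 ∧ nineteen ≠ -1 then nineteen
         else if n = 19 ∧ nineteen = -1 then 19 * F 18
         else n * F (n - 1)) = F n)) := by
  refine ⟨Or.inl rfl, ?_, ?_⟩
  · intro nineteen n hInv
    split
    · right; rfl
    · exact hInv
  · intro nineteen n hInv
    split
    · next h => exact (hF1 n h).symm
    · next h =>
      split
      · next h2 =>
        obtain ⟨rfl, hne⟩ := h2
        rcases hInv with h' | h'
        · exact absurd h' hne
        · rw [h', hF2 19 (by norm_num)]; norm_num
      · split
        · next h3 =>
          obtain ⟨rfl, _⟩ := h3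
          rw [hF2 19 (by norm_num)]; norm_num
        · exact (hF2 n (by omega)).symm
end

section
/- Fold-based purity of the memoizing Fibonacci library: starting from the all-zero cache and processing any list of inputs ns : List ℤ by the memoized Fibonacci transition (which returns Fib n and updates the cache at entries as described), the list of outputs equals ns.map Fib; in particular the output for a given input does not depend on its position in the list or on the other inputs. -/
/-- One step of the memoized Fibonacci transition: new cache. -/
def fibStep (Fib : ℤ → ℤ) (c : ℤ → ℤ) (n : ℤ) : ℤ → ℤ :=
  if n ≤ 2 then c
  else if c n ≠ 0 then c
  else Function.update c n (Fib (n - 1) + Fib (n - 2))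

/-- Return value of memoized Fibonacci from cache `c` on input `n`. -/
def fibRet (Fib : ℤ → ℤ) (c : ℤ → ℤ) (n : ℤ) : ℤ :=
  if n ≤ 2 then 1
  else if c n ≠ 0 then c n
  else Fib (n - 1) + Fib (n - 2)

/-- Sequential execution collecting outputs. -/
def fibRun (Fib : ℤ → ℤ) : (ℤ → ℤ) → List ℤ → List ℤ
  | _, [] => []
  | c, n :: ns => fibRet Fib c n :: fibRun Fib (fibStep Fib c n) ns

theorem fibRun_aux (Fib : ℤ → ℤ)
    (hFib1 : ∀ n : ℤ, n ≤ 2 → Fib n = 1)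
    (hFib2 : ∀ n : ℤ, n > 2 → Fib n = Fib (n - 1) + Fib (n - 2))
    (ns : List ℤ) :
    ∀ c : ℤ → ℤ, (∀ k, c k = 0 ∨ c k = Fib k) →
      fibRun Fib c ns = ns.map Fib := by
  induction ns with
  | nil => intro c _; rfl
  | cons n ns ih =>
    intro c hc
    have hret : fibRet Fib c n = Fib n := by
      unfold fibRet
      by_cases h : n ≤ 2
      · simp [h, hFib1 n h]
      · rcases hc n with h0 | hv
        · simp [h, h0, (hFib2 n (by omega)).symm]
        · by_cases hz : c n = 0
          · simp [h, hz, (hFib2 n (by omega)).symm]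
          · simp [h, hz, hv, (hFib2 n (by omega)).symm]
    have hstep : ∀ k, fibStep Fib c n k = 0 ∨ fibStep Fib c n k = Fib k := by
      intro k
      unfold fibStep
      by_cases h : n ≤ 2
      · simpa [h] using hc k
      · by_cases hz : c n = 0
        · simp only [h, if_false, hz, ne_eq, not_true_eq_false, if_false,
            not_false_eq_true, if_neg]
          by_cases hkn : k = n
          · subst hkn
            right
            simp [Function.update, (hFib2 k (by omega)).symm]
          · simpa [Function.update, hkn] using hc k
        · simpa [h, hz] using hc k
    simp [fibRun, hret, ih _ hstep]

theorem stmt_18 (Fib : ℤ → ℤ)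
    (hFib1 : ∀ n : ℤ, n ≤ 2 → Fib n = 1)
    (hFib2 : ∀ n : ℤ, n > 2 → Fib n = Fib (n - 1) + Fib (n - 2))
    (ns : List ℤ) :
    fibRun Fib (fun _ => 0) ns = ns.map Fib := by
  exact fibRun_aux Fib hFib1 hFib2 ns _ (fun k => Or.inl rfl)
end
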